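/- Let M = {v_1^{m_1}, ..., v_ℓ^{m_ℓ}} with distinct ranks v_1 < ... < v_ℓ, n = Σ m_i, n_i = m_1 + ... + m_i. If there exists a code C_L ⊆ (Z_q)^{n−m_1} with q > n_{ℓ−1} whose minimum Lee distance is d, then there exists a code C_K ⊆ S(M) with minimum Kendall τ-distance at least d and of size |C_K| = |C_L ∩ [Z]^M|. -/

import Mathlib

/-- `AdjTrans σ π` : the sequence `π` is obtained from the sequence `σ` by exchanging
two distinct adjacent elements (an adjacent transposition). -/
def AdjTrans (σ π : List ℤ) : Prop :=
  ∃ (l₁ l₂ : List ℤ) (a b : ℤ), a ≠ b ∧ σ = l₁ ++ a :: b :: l₂ ∧ π = l₁ ++ b :: a :: l₂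

/-- `StepsTo n σ π` : `π` can be obtained from `σ` by a sequence of `n` adjacent
transpositions. -/
def StepsTo : ℕ → List ℤ → List ℤ → Prop
  | 0 => fun σ π => σ = π
  | n + 1 => fun σ π => ∃ τ, AdjTrans σ τ ∧ StepsTo n τ π

/-- The Kendall τ-distance between two sequences: the minimum number of adjacent
transpositions needed to transform one into the other. -/
noncomputable def dK (σ π : List ℤ) : ℕ := sInf {n | StepsTo n σ π}

/-- The list `[a, a+1, ..., a+len-1]` of integers. -/
def rangeList (a len : ℕ) : List ℤ := (List.range' a len).map (fun x => (x : ℤ))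

/-- The substitution map `T_θ`: the `r`-th occurrence (from the left, `0`-indexed) of a
rank `a` in `σ` is replaced by the `r`-th entry of the list `θ a`. -/
def Tmap (θ : ℤ → List ℤ) (σ : List ℤ) : List ℤ :=
  (List.range σ.length).map (fun j =>
    (θ (σ.getD j 0)).getD ((σ.take j).count (σ.getD j 0)) 0)

/-- `psiEntry σ a s` : the number of positions in `σ` strictly to the right of the `s`-th
occurrence (`0`-indexed) of `a` in `σ` that hold an element smaller than `a`. -/
def psiEntry (σ : List ℤ) (a : ℤ) (s : ℕ) : ℕ :=
  (σ.drop (((σ.indexesOf a).getD s σ.length) + 1)).countP (fun x => decide (x < a))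

/-- The Manhattan distance between two vectors of naturals (presented as lists). -/
def manhattanL (x y : List ℕ) : ℕ :=
  ∑ i ∈ Finset.range (max x.length y.length), ((x.getD i 0 : ℤ) - (y.getD i 0 : ℤ)).natAbs

/-- The Lee distance over `Z_q` between two vectors with entries in `{0, …, q-1}`
(presented as lists). -/
def leeDistL (q : ℕ) (x y : List ℕ) : ℕ :=
  ∑ i ∈ Finset.range (max x.length y.length),
    min (((x.getD i 0 : ℤ) - (y.getD i 0 : ℤ)).natAbs)
      (q - ((x.getD i 0 : ℤ) - (y.getD i 0 : ℤ)).natAbs)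

/-- The Lee distance between two vectors over `ZMod q`. -/
def zmodLee {q N : ℕ} (x y : Fin N → ZMod q) : ℕ :=
  ∑ i, min (x i - y i).val (y i - x i).val

/-- `permList k σ` : `σ` is (an ordering representing) a permutation of `{1, …, k}`. -/
def permList (k : ℕ) (σ : List ℤ) : Prop :=
  (↑σ : Multiset ℤ) = (↑(rangeList 1 k) : Multiset ℤ)

/-- The multiset `M_{k,r} = {0^k, k+1, …, k+r}`. -/
def Mkr (k r : ℕ) : Multiset ℤ :=
  Multiset.replicate k (0 : ℤ) + (↑(rangeList (k + 1) r) : Multiset ℤ)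

/-- `α_{↓k}` : delete from `α` all elements larger than `k`. -/
def restrictTo (k : ℕ) (α : List ℤ) : List ℤ :=
  α.filter (fun x => decide (x ≤ (k : ℤ)))

/-- `α_{k↦0}` : replace in `α` every element of `{1, …, k}` by `0`. -/
def mapToZero (k : ℕ) (α : List ℤ) : List ℤ :=
  α.map (fun x => if 1 ≤ x ∧ x ≤ (k : ℤ) then 0 else x)

/-- `star σ ρ = σ ∗ ρ` : replace the zeros of `ρ`, from left to right, by the elements
of `σ` in order. -/
def starP : List ℤ → List ℤ → List ℤ
  | _, [] => []
  | σ, x :: ρ' => if x = 0 then σ.headD 0 :: starP σ.tail ρ' else x :: starP σ ρ'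



/-! ### Auxiliary definitions -/

def psiB (a : ℤ) : List ℤ → List ℕ
  | [] => []
  | x :: t => if x = a then (t.countP (fun y => decide (y < a))) :: psiB a t else psiB a t

def ins (a : ℤ) : List ℕ → List ℤ → List ℤ
  | [], σ => σ
  | e :: es, σ => (σ.take (σ.length - e)) ++ a :: ins a es (σ.drop (σ.length - e))

def mdist (u w : List ℕ) : ℕ :=
  (List.zipWith (fun (a b : ℕ) => ((a : ℤ) - (b : ℤ)).natAbs) u w).sum

def PsiK (v : ℕ → ℤ) (k : ℕ) (σ : List ℤ) : List ℕ :=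
  ((List.range k).map (fun j => psiB (v (j + 1)) σ)).flatten

def off (m : ℕ → ℕ) (i : ℕ) : ℕ := ∑ j ∈ Finset.Ico 1 i, m j

def chunkF (m : ℕ → ℕ) (x : List ℕ) : ℕ → List ℕ
  | 0 => List.replicate (m 0) 0
  | i + 1 => (x.drop (off m (i + 1))).take (m (i + 1))

def stageF (v : ℕ → ℤ) (m : ℕ → ℕ) (x : List ℕ) : ℕ → List ℤ
  | 0 => []
  | i + 1 => ins (v i) (chunkF m x i) (stageF v m x i)

lemma psiB_cons_self (a : ℤ) (t : List ℤ) :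
    psiB a (a :: t) = (t.countP (fun y => decide (y < a))) :: psiB a t := by
  simp [psiB]

lemma psiB_cons_ne {x a : ℤ} (h : x ≠ a) (t : List ℤ) : psiB a (x :: t) = psiB a t := by
  simp [psiB, h]

lemma psiB_length (a : ℤ) (l : List ℤ) : (psiB a l).length = l.count a := by
  induction l with
  | nil => simp [psiB]
  | cons x t ih =>
    by_cases h : x = a
    · subst h; simp [psiB_cons_self, ih, List.count_cons]
    · simp [psiB_cons_ne h, ih, List.count_cons, h]

lemma psiB_eq_nil_of_not_mem {a : ℤ} {l : List ℤ} (h : a ∉ l) : psiB a l = [] := by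
  have := psiB_length a l
  rw [List.count_eq_zero_of_not_mem h] at this
  exact List.eq_nil_of_length_eq_zero this

lemma psiB_append_not_mem {a : ℤ} {l₁ : List ℤ} (h : a ∉ l₁) (l₂ : List ℤ) :
    psiB a (l₁ ++ l₂) = psiB a l₂ := by
  induction l₁ with
  | nil => simp
  | cons x t ih =>
    have hx : x ≠ a := fun hh => h (hh ▸ (show x ∈ x :: t from List.mem_cons_self))
    simp only [List.cons_append, psiB_cons_ne hx]
    exact ih (fun hm => h (List.mem_cons_of_mem x hm))

/-- removing an element `> a` in the middle does not change `psiB a`. -/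
lemma psiB_middle {a b : ℤ} (hab : a < b) (l₁ l₂ : List ℤ) :
    psiB a (l₁ ++ b :: l₂) = psiB a (l₁ ++ l₂) := by
  induction l₁ with
  | nil =>
    have hb : b ≠ a := ne_of_gt hab
    simp [psiB_cons_ne hb]
  | cons x t ih =>
    by_cases h : x = a
    · subst h
      simp only [List.cons_append, psiB_cons_self, ih]
      congr 1
      simp [List.countP_append, List.countP_cons, not_lt.2 hab.le]
    · simp [List.cons_append, psiB_cons_ne h, ih]

lemma psiB_ins_gt {a b : ℤ} (hab : a < b) (e : List ℕ) (l₁ l₂ : List ℤ) :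
    psiB a (l₁ ++ ins b e l₂) = psiB a (l₁ ++ l₂) := by
  induction e generalizing l₁ l₂ with
  | nil => simp [ins]
  | cons e₀ es ih =>
    simp only [ins]
    rw [show l₁ ++ ((l₂.take (l₂.length - e₀)) ++ b :: ins b es (l₂.drop (l₂.length - e₀)))
        = (l₁ ++ l₂.take (l₂.length - e₀)) ++ b :: ins b es (l₂.drop (l₂.length - e₀)) by simp,
      psiB_middle hab, show (l₁ ++ l₂.take (l₂.length - e₀)) ++ ins b es (l₂.drop (l₂.length - e₀))
        = (l₁ ++ l₂.take (l₂.length - e₀)) ++ ins b es (l₂.drop (l₂.length - e₀)) from rfl]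
    rw [show (l₁ ++ l₂.take (l₂.length - e₀)) ++ ins b es (l₂.drop (l₂.length - e₀))
        = l₁ ++ (l₂.take (l₂.length - e₀) ++ ins b es (l₂.drop (l₂.length - e₀))) by simp]
    rw [show l₂.take (l₂.length - e₀) ++ ins b es (l₂.drop (l₂.length - e₀))
        = (l₂.take (l₂.length - e₀)) ++ ins b es (l₂.drop (l₂.length - e₀)) from rfl]
    have := ih (l₁ ++ l₂.take (l₂.length - e₀)) (l₂.drop (l₂.length - e₀))
    simp only [List.append_assoc] at this
    rw [this]
    simp

lemma ins_multiset (a : ℤ) (e : List ℕ) (σ : List ℤ) :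
    (↑(ins a e σ) : Multiset ℤ) = Multiset.replicate e.length a + ↑σ := by
  induction e generalizing σ with
  | nil => simp [ins]
  | cons e₀ es ih =>
    simp only [ins, List.length_cons]
    have h1 : (↑((σ.take (σ.length - e₀)) ++ a :: ins a es (σ.drop (σ.length - e₀))) : Multiset ℤ)
        = ↑(σ.take (σ.length - e₀)) + (a ::ₘ ↑(ins a es (σ.drop (σ.length - e₀)))) := by simp
    rw [h1, ih]
    have hσ : (↑σ : Multiset ℤ) = ↑(σ.take (σ.length - e₀)) + ↑(σ.drop (σ.length - e₀)) := by
      nth_rewrite 1 [← List.take_append_drop (σ.length - e₀) σ]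
      simp
    rw [hσ, Multiset.replicate_succ, ← Multiset.singleton_add, ← Multiset.singleton_add]
    abel

lemma ins_mem {a : ℤ} {e : List ℕ} {σ : List ℤ} {x : ℤ} (hx : x ∈ ins a e σ) :
    x = a ∨ x ∈ σ := by
  have h := ins_multiset a e σ
  have hx' : x ∈ (↑(ins a e σ) : Multiset ℤ) := by simpa using hx
  rw [h] at hx'
  rcases Multiset.mem_add.1 hx' with h | h
  · exact Or.inl (Multiset.eq_of_mem_replicate h)
  · exact Or.inr (by simpa using h)

lemma ins_countP (a : ℤ) (p : ℤ → Bool) (hp : p a = false) (e : List ℕ) (σ : List ℤ) :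
    (ins a e σ).countP p = σ.countP p := by
  induction e generalizing σ with
  | nil => simp [ins]
  | cons e₀ es ih =>
    simp only [ins, List.countP_append, List.countP_cons, hp]
    rw [ih]
    simp only [Bool.false_eq_true, if_false, add_zero]
    rw [← List.countP_append, List.take_append_drop]

lemma psiB_ins_self (a : ℤ) (e : List ℕ) (σ : List ℤ)
    (hσ : ∀ x ∈ σ, x < a)
    (hlen : ∀ x ∈ e, x ≤ σ.length)
    (hchain : List.Chain' (· ≥ ·) e) :
    psiB a (ins a e σ) = e := by
  induction e generalizing σ with
  | nil =>
    simp only [ins]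
    exact psiB_eq_nil_of_not_mem (fun h => absurd (hσ a h) (lt_irrefl a))
  | cons e₀ es ih =>
    simp only [ins]
    have hnm : a ∉ σ.take (σ.length - e₀) := fun h =>
      absurd (hσ a (List.mem_of_mem_take h)) (lt_irrefl a)
    rw [psiB_append_not_mem hnm, psiB_cons_self]
    have he₀ : e₀ ≤ σ.length := hlen e₀ List.mem_cons_self
    have hdlen : (σ.drop (σ.length - e₀)).length = e₀ := by
      rw [List.length_drop]; omega
    have hcount : (ins a es (σ.drop (σ.length - e₀))).countP (fun y => decide (y < a)) = e₀ := by
      rw [ins_countP a _ (by simp) es]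
      have hall : ∀ x ∈ σ.drop (σ.length - e₀), x < a := fun x hx => hσ x (List.mem_of_mem_drop hx)
      calc (σ.drop (σ.length - e₀)).countP (fun y => decide (y < a))
          = (σ.drop (σ.length - e₀)).length := by
            rw [List.countP_eq_length]
            intro x hx; simpa using hall x hx
        _ = e₀ := hdlen
    rw [hcount]
    congr 1
    have hpw : ∀ x ∈ es, x ≤ e₀ := by
      have hp := (List.isChain_iff_pairwise.1 hchain)
      intro x hx
      exact List.rel_of_pairwise_cons hp hx
    exact ih (σ.drop (σ.length - e₀))
      (fun x hx => hσ x (List.mem_of_mem_drop hx))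
      (fun x hx => by rw [hdlen]; exact hpw x hx)
      (hchain.tail)

lemma mdist_nil_left (w : List ℕ) : mdist [] w = 0 := by simp [mdist]
lemma mdist_cons (u w : ℕ) (us ws : List ℕ) :
    mdist (u :: us) (w :: ws) = ((u : ℤ) - w).natAbs + mdist us ws := by
  simp [mdist]
lemma mdist_self (u : List ℕ) : mdist u u = 0 := by
  induction u with
  | nil => simp [mdist]
  | cons x t ih => rw [mdist_cons, ih]; simp
lemma mdist_append {u₁ w₁ : List ℕ} (h : u₁.length = w₁.length) (u₂ w₂ : List ℕ) :
    mdist (u₁ ++ u₂) (w₁ ++ w₂) = mdist u₁ w₁ + mdist u₂ w₂ := by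
  unfold mdist
  rw [List.zipWith_append h, List.sum_append]

lemma manhattanL_eq_sum (x y : List ℕ) (N : ℕ) (hx : x.length ≤ N) (hy : y.length ≤ N) :
    manhattanL x y = ∑ i ∈ Finset.range N, ((x.getD i 0 : ℤ) - (y.getD i 0 : ℤ)).natAbs := by
  unfold manhattanL
  rw [← Finset.sum_range_add_sum_Ico _ (show max x.length y.length ≤ N by omega)]
  have : ∑ i ∈ Finset.Ico (max x.length y.length) N,
      ((x.getD i 0 : ℤ) - (y.getD i 0 : ℤ)).natAbs = 0 := by
    apply Finset.sum_eq_zero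
    intro i hi
    rw [Finset.mem_Ico] at hi
    rw [List.getD_eq_default _ _ (by omega), List.getD_eq_default _ _ (by omega)]
    simp
  omega

lemma manhattanL_triangle (x y z : List ℕ) :
    manhattanL x z ≤ manhattanL x y + manhattanL y z := by
  set N := max (max x.length y.length) z.length with hN
  rw [manhattanL_eq_sum x z N (by omega) (by omega),
      manhattanL_eq_sum x y N (by omega) (by omega),
      manhattanL_eq_sum y z N (by omega) (by omega), ← Finset.sum_add_distrib]
  apply Finset.sum_le_sum
  intro i _
  have : ((x.getD i 0 : ℤ) - z.getD i 0) = ((x.getD i 0 : ℤ) - y.getD i 0) + ((y.getD i 0 : ℤ) - z.getD i 0) := by ring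
  rw [this]
  exact Int.natAbs_add_le _ _

lemma leeDistL_le_manhattanL (q : ℕ) (x y : List ℕ) : leeDistL q x y ≤ manhattanL x y := by
  apply Finset.sum_le_sum
  intro i _
  exact min_le_left _ _

lemma manhattanL_eq_mdist {u w : List ℕ} (h : u.length = w.length) :
    manhattanL u w = mdist u w := by
  induction u generalizing w with
  | nil =>
    have : w = [] := List.eq_nil_of_length_eq_zero h.symm
    subst this; simp [manhattanL, mdist]
  | cons a t ih =>
    cases w with
    | nil => simp at h
    | cons b s =>
      rw [mdist_cons, ← ih (by simpa using h)]
      unfold manhattanL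
      simp only [List.length_cons]
      have hm : max (t.length + 1) (s.length + 1) = max t.length s.length + 1 := by omega
      rw [hm, Finset.sum_range_succ']
      simp only [List.getD_cons_succ, List.getD_cons_zero]
      omega

lemma list_sum_range (f : ℕ → ℕ) (k : ℕ) :
    ((List.range k).map f).sum = ∑ j ∈ Finset.range k, f j := by
  induction k with
  | zero => simp
  | succ n ih => simp [List.range_succ, Finset.sum_range_succ, ih]

lemma psiK_length (v : ℕ → ℤ) (k : ℕ) (σ : List ℤ) :
    (PsiK v k σ).length = ∑ j ∈ Finset.range k, σ.count (v (j + 1)) := by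
  unfold PsiK
  rw [List.length_flatten, List.map_map, ← list_sum_range (fun j => σ.count (v (j+1))) k]
  congr 1
  simp [Function.comp, psiB_length]

lemma count_swap (c a b : ℤ) (l₁ l₂ : List ℤ) :
    (l₁ ++ a :: b :: l₂).count c = (l₁ ++ b :: a :: l₂).count c := by
  simp only [List.count_append, List.count_cons]
  omega

lemma countP_swap (p : ℤ → Bool) (a b : ℤ) (l₁ l₂ : List ℤ) :
    (l₁ ++ a :: b :: l₂).countP p = (l₁ ++ b :: a :: l₂).countP p := by
  simp only [List.countP_append, List.countP_cons]
  omega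

lemma mdist_psiB_swap (c a b : ℤ) (l₁ l₂ : List ℤ) :
    mdist (psiB c (l₁ ++ a :: b :: l₂)) (psiB c (l₁ ++ b :: a :: l₂)) ≤
      if (c = a ∧ b < a) ∨ (c = b ∧ a < b) then 1 else 0 := by
  induction l₁ with
  | cons x t ih =>
    by_cases hx : x = c
    · subst hx
      simp only [List.cons_append, psiB_cons_self]
      rw [mdist_cons, countP_swap]
      simpa using ih
    · simp only [List.cons_append, psiB_cons_ne hx]
      exact ih
  | nil =>
    simp only [List.nil_append]
    by_cases hca : c = a
    · subst hca
      by_cases hcb : c = b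
      · subst hcb
        rw [mdist_self]
        simp
      · have hbc : b ≠ c := fun h => hcb h.symm
        rw [psiB_cons_self, psiB_cons_ne hbc, psiB_cons_ne hbc, psiB_cons_self, mdist_cons,
          mdist_self, List.countP_cons]
        by_cases hlt : b < c
        · simp [hlt, not_lt.2 hlt.le]
        · simp [hlt]
    · by_cases hcb : c = b
      · subst hcb
        have hac : a ≠ c := fun h => hca h.symm
        rw [psiB_cons_ne hac, psiB_cons_self, psiB_cons_self, psiB_cons_ne hac, mdist_cons,
          mdist_self, List.countP_cons]
        by_cases hlt : a < c
        · simp [hlt, not_lt.2 hlt.le, hca]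
        · simp [hlt, hca]
      · have hac : a ≠ c := fun h => hca h.symm
        have hbc : b ≠ c := fun h => hcb h.symm
        rw [psiB_cons_ne hac, psiB_cons_ne hbc, psiB_cons_ne hbc, psiB_cons_ne hac, mdist_self]
        simp

lemma mdist_psiK_swap (v : ℕ → ℤ) (k : ℕ) (a b : ℤ) (l₁ l₂ : List ℤ) :
    mdist (PsiK v k (l₁ ++ a :: b :: l₂)) (PsiK v k (l₁ ++ b :: a :: l₂)) ≤
      ∑ j ∈ Finset.range k,
        (if (v (j+1) = a ∧ b < a) ∨ (v (j+1) = b ∧ a < b) then 1 else 0) := by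
  induction k with
  | zero => simp [PsiK, mdist_self]
  | succ n ih =>
    unfold PsiK
    rw [List.range_succ, List.map_append, List.map_append, List.flatten_append,
      List.flatten_append]
    simp only [List.map_cons, List.map_nil, List.flatten_cons, List.flatten_nil,
      List.append_nil]
    have hlen : (PsiK v n (l₁ ++ a :: b :: l₂)).length = (PsiK v n (l₁ ++ b :: a :: l₂)).length := by
      rw [psiK_length, psiK_length]
      exact Finset.sum_congr rfl (fun j _ => count_swap _ a b l₁ l₂)
    rw [show ((List.range n).map (fun j => psiB (v (j + 1)) (l₁ ++ a :: b :: l₂))).flatten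
        = PsiK v n (l₁ ++ a :: b :: l₂) from rfl,
      show ((List.range n).map (fun j => psiB (v (j + 1)) (l₁ ++ b :: a :: l₂))).flatten
        = PsiK v n (l₁ ++ b :: a :: l₂) from rfl,
      mdist_append hlen, Finset.sum_range_succ]
    exact Nat.add_le_add ih (mdist_psiB_swap _ a b l₁ l₂)

lemma indicator_sum_le_one (v : ℕ → ℤ) (k : ℕ) (a b : ℤ) (hab : a ≠ b)
    (hvinj : ∀ i j, i < k → j < k → v (i+1) = v (j+1) → i = j) :
    (∑ j ∈ Finset.range k,
      (if (v (j+1) = a ∧ b < a) ∨ (v (j+1) = b ∧ a < b) then 1 else 0)) ≤ 1 := by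
  rw [Finset.sum_ite, Finset.sum_const_zero, add_zero, Finset.sum_const, smul_eq_mul, mul_one]
  apply Finset.card_le_one.2
  intro i hi j hj
  simp only [Finset.mem_filter, Finset.mem_range] at hi hj
  apply hvinj i j hi.1 hj.1
  rcases hi.2 with ⟨h1, h2⟩ | ⟨h1, h2⟩ <;> rcases hj.2 with ⟨h3, h4⟩ | ⟨h3, h4⟩ <;>
    (try omega) <;> rw [h1, h3]

lemma adjTrans_multiset {σ π : List ℤ} (h : AdjTrans σ π) : (↑σ : Multiset ℤ) = ↑π := by
  obtain ⟨l₁, l₂, a, b, _, h1, h2⟩ := h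
  subst h1; subst h2
  have : ∀ c, (l₁ ++ a :: b :: l₂).count c = (l₁ ++ b :: a :: l₂).count c :=
    fun c => count_swap c a b l₁ l₂
  ext c
  simpa using this c

lemma stepsTo_multiset {n : ℕ} {σ π : List ℤ} (h : StepsTo n σ π) : (↑σ : Multiset ℤ) = ↑π := by
  induction n generalizing σ with
  | zero => rw [h]
  | succ m ih =>
    obtain ⟨τ, h1, h2⟩ := h
    exact (adjTrans_multiset h1).trans (ih h2)


lemma psiK_length_congr {v : ℕ → ℤ} {k : ℕ} {σ π : List ℤ} (h : (↑σ : Multiset ℤ) = ↑π) :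
    (PsiK v k σ).length = (PsiK v k π).length := by
  rw [psiK_length, psiK_length]
  refine Finset.sum_congr rfl (fun j _ => ?_)
  have := congrArg (Multiset.count (v (j+1))) h
  simpa using this

lemma manhattan_psiK_adj (v : ℕ → ℤ) (k : ℕ)
    (hvinj : ∀ i j, i < k → j < k → v (i+1) = v (j+1) → i = j)
    {σ π : List ℤ} (h : AdjTrans σ π) :
    manhattanL (PsiK v k σ) (PsiK v k π) ≤ 1 := by
  obtain ⟨l₁, l₂, a, b, hab, h1, h2⟩ := h
  have hlen := psiK_length_congr (v := v) (k := k)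
    (adjTrans_multiset ⟨l₁, l₂, a, b, hab, h1, h2⟩)
  rw [manhattanL_eq_mdist hlen, h1, h2]
  exact le_trans (mdist_psiK_swap v k a b l₁ l₂) (indicator_sum_le_one v k a b hab hvinj)

lemma manhattan_psiK_steps (v : ℕ → ℤ) (k : ℕ)
    (hvinj : ∀ i j, i < k → j < k → v (i+1) = v (j+1) → i = j)
    {n : ℕ} {σ π : List ℤ} (h : StepsTo n σ π) :
    manhattanL (PsiK v k σ) (PsiK v k π) ≤ n := by
  induction n generalizing σ with
  | zero => rw [h, manhattanL_eq_mdist rfl, mdist_self]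
  | succ m ih =>
    obtain ⟨τ, h1, h2⟩ := h
    calc manhattanL (PsiK v k σ) (PsiK v k π)
        ≤ manhattanL (PsiK v k σ) (PsiK v k τ) + manhattanL (PsiK v k τ) (PsiK v k π) :=
          manhattanL_triangle _ _ _
      _ ≤ 1 + m := Nat.add_le_add (manhattan_psiK_adj v k hvinj h1) (ih h2)
      _ = m + 1 := by omega

lemma stepsTo_cons {n : ℕ} {t t' : List ℤ} (x : ℤ) (h : StepsTo n t t') :
    StepsTo n (x :: t) (x :: t') := by
  induction n generalizing t with
  | zero => rw [h]; rfl
  | succ m ih =>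
    obtain ⟨τ, ⟨l₁, l₂, a, b, hab, h1, h2⟩, h3⟩ := h
    exact ⟨x :: τ, ⟨x :: l₁, l₂, a, b, hab, by rw [h1]; rfl, by rw [h2]; rfl⟩, ih h3⟩

lemma stepsTo_trans {m n : ℕ} {σ τ π : List ℤ} (h1 : StepsTo m σ τ) (h2 : StepsTo n τ π) :
    StepsTo (m + n) σ π := by
  induction m generalizing σ with
  | zero => rw [h1]; simpa using h2
  | succ p ih =>
    obtain ⟨ρ, ha, hb⟩ := h1
    rw [show p + 1 + n = (p + n) + 1 from by omega]
    exact ⟨ρ, ha, ih hb⟩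

lemma move_to_front {p : ℤ} {σ : List ℤ} (h : p ∈ σ) :
    ∃ (n : ℕ) (σ' : List ℤ), StepsTo n σ (p :: σ') ∧ (↑σ : Multiset ℤ) = p ::ₘ ↑σ' := by
  induction σ with
  | nil => cases h
  | cons x t ih =>
    by_cases hx : x = p
    · subst hx
      exact ⟨0, t, rfl, rfl⟩
    · have hp : p ∈ t := by
        rcases List.mem_cons.1 h with h' | h'
        · exact absurd h'.symm hx
        · exact h'
      obtain ⟨n, t', h1, h2⟩ := ih hp
      refine ⟨n + 1, x :: t', ?_, ?_⟩
      · have step1 : StepsTo n (x :: t) (x :: p :: t') := stepsTo_cons x h1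
        have step2 : StepsTo 1 (x :: p :: t') (p :: x :: t') :=
          ⟨p :: x :: t', ⟨[], t', x, p, hx, rfl, rfl⟩, rfl⟩
        exact stepsTo_trans step1 step2
      · have : (↑(x :: t) : Multiset ℤ) = x ::ₘ ↑t := rfl
        rw [this, h2]
        rw [Multiset.cons_swap]
        rfl

lemma reach {σ π : List ℤ} (h : (↑σ : Multiset ℤ) = ↑π) : ∃ n, StepsTo n σ π := by
  induction π generalizing σ with
  | nil =>
    have : σ = [] := by simpa using h
    exact ⟨0, this⟩
  | cons p π' ih =>
    have hp : p ∈ σ := by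
      have : p ∈ (↑σ : Multiset ℤ) := by rw [h]; simp
      simpa using this
    obtain ⟨n, σ', h1, h2⟩ := move_to_front hp
    have hσ' : (↑σ' : Multiset ℤ) = ↑π' := by
      have : p ::ₘ (↑σ' : Multiset ℤ) = p ::ₘ ↑π' := by
        rw [← h2, h]; rfl
      exact (Multiset.cons_inj_right p).1 this
    obtain ⟨m, h3⟩ := ih hσ'
    exact ⟨n + m, stepsTo_trans h1 (stepsTo_cons p h3)⟩

lemma off_succ (m : ℕ → ℕ) (i : ℕ) (hi : 1 ≤ i + 1) :
    off m (i + 2) = off m (i + 1) + m (i + 1) := by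
  unfold off
  rw [Finset.sum_Ico_succ_top (by omega)]

lemma off_mono (m : ℕ → ℕ) {i j : ℕ} (h : i ≤ j) : off m i ≤ off m j := by
  apply Finset.sum_le_sum_of_subset
  intro t ht
  simp only [Finset.mem_Ico] at *
  omega

lemma chunkF_length (m : ℕ → ℕ) (x : List ℕ) {ℓ i : ℕ} (hi : i < ℓ)
    (hx : x.length = off m ℓ) : (chunkF m x i).length = m i := by
  cases i with
  | zero => simp [chunkF]
  | succ n =>
    simp only [chunkF, List.length_take, List.length_drop]
    have h1 : off m (n + 2) ≤ off m ℓ := off_mono m (by omega)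
    have h2 := off_succ m n (by omega)
    omega

lemma stageF_mem (v : ℕ → ℤ) (m : ℕ → ℕ) (x : List ℕ) (i : ℕ) :
    ∀ y ∈ stageF v m x i, ∃ j, j < i ∧ y = v j := by
  induction i with
  | zero => intro y hy; cases hy
  | succ n ih =>
    intro y hy
    rcases ins_mem hy with h | h
    · exact ⟨n, by omega, h⟩
    · obtain ⟨j, hj, hjy⟩ := ih y h
      exact ⟨j, by omega, hjy⟩

lemma stageF_multiset (v : ℕ → ℤ) (m : ℕ → ℕ) (x : List ℕ) {ℓ : ℕ} (hx : x.length = off m ℓ)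
    {i : ℕ} (hi : i ≤ ℓ) :
    (↑(stageF v m x i) : Multiset ℤ) = ∑ j ∈ Finset.range i, Multiset.replicate (m j) (v j) := by
  induction i with
  | zero => simp [stageF]
  | succ n ih =>
    simp only [stageF]
    rw [ins_multiset, chunkF_length m x (show n < ℓ by omega) hx, ih (by omega),
      Finset.sum_range_succ]
    abel

lemma stageF_length (v : ℕ → ℤ) (m : ℕ → ℕ) (x : List ℕ) {ℓ : ℕ} (hx : x.length = off m ℓ)
    {i : ℕ} (hi : i ≤ ℓ) :
    (stageF v m x i).length = ∑ j ∈ Finset.range i, m j := by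
  have h := stageF_multiset v m x hx hi
  have := congrArg Multiset.card h
  simpa using this

lemma psiB_stageF (v : ℕ → ℤ) (m : ℕ → ℕ) (x : List ℕ) {ℓ : ℕ}
    (hv : ∀ i j, i < j → j < ℓ → v i < v j)
    (hx : x.length = off m ℓ)
    (hchain : ∀ i, 1 ≤ i → i < ℓ → List.Chain' (· ≥ ·) (chunkF m x i))
    (hbound : ∀ i, 1 ≤ i → i < ℓ → ∀ y ∈ chunkF m x i, y ≤ ∑ j ∈ Finset.range i, m j)
    {i j : ℕ} (hj1 : 1 ≤ j) (hji : j < i) (hi : i ≤ ℓ) :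
    psiB (v j) (stageF v m x i) = chunkF m x j := by
  induction i with
  | zero => omega
  | succ n ih =>
    simp only [stageF]
    by_cases hjn : j = n
    · subst hjn
      apply psiB_ins_self
      · intro y hy
        obtain ⟨t, ht, hty⟩ := stageF_mem v m x j y hy
        rw [hty]
        exact hv t j ht (by omega)
      · intro y hy
        rw [stageF_length v m x hx (by omega)]
        exact hbound j hj1 (by omega) y hy
      · exact hchain j hj1 (by omega)
    · have hjlt : j < n := by omega
      have hlt : v j < v n := hv j n hjlt (by omega)
      have := psiB_ins_gt hlt (chunkF m x n) [] (stageF v m x n)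
      simp only [List.nil_append] at this
      rw [this, ih (by omega) (by omega)]

lemma flatten_chunks (m : ℕ → ℕ) (x : List ℕ) (k : ℕ) :
    ((List.range k).map (fun j => chunkF m x (j + 1))).flatten = x.take (off m (k + 1)) := by
  induction k with
  | zero =>
    have : off m 1 = 0 := by simp [off]
    simp [this]
  | succ n ih =>
    rw [List.range_succ, List.map_append, List.flatten_append, ih]
    simp only [List.map_cons, List.map_nil, List.flatten_cons, List.flatten_nil, List.append_nil]
    rw [off_succ m n (by omega), List.take_add]
    rfl

lemma psiK_stageF (v : ℕ → ℤ) (m : ℕ → ℕ) (x : List ℕ) {ℓ : ℕ} (hℓ : 1 ≤ ℓ)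
    (hv : ∀ i j, i < j → j < ℓ → v i < v j)
    (hx : x.length = off m ℓ)
    (hchain : ∀ i, 1 ≤ i → i < ℓ → List.Chain' (· ≥ ·) (chunkF m x i))
    (hbound : ∀ i, 1 ≤ i → i < ℓ → ∀ y ∈ chunkF m x i, y ≤ ∑ j ∈ Finset.range i, m j) :
    PsiK v (ℓ - 1) (stageF v m x ℓ) = x := by
  unfold PsiK
  have hmap : (List.range (ℓ - 1)).map (fun j => psiB (v (j + 1)) (stageF v m x ℓ))
      = (List.range (ℓ - 1)).map (fun j => chunkF m x (j + 1)) := by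
    apply List.map_congr_left
    intro j hj
    rw [List.mem_range] at hj
    exact psiB_stageF v m x hv hx hchain hbound (by omega) (by omega) le_rfl
  rw [hmap, flatten_chunks, show ℓ - 1 + 1 = ℓ by omega, ← hx, List.take_length]

lemma flatten_take_length (b : List (List ℕ)) (k : ℕ) (hk : k ≤ b.length) :
    (b.take k).flatten.length = ∑ j ∈ Finset.range k, (b.getD j []).length := by
  induction k with
  | zero => simp
  | succ n ih =>
    have hn : n < b.length := by omega
    rw [List.take_succ, List.flatten_append, List.length_append, ih (by omega),
      Finset.sum_range_succ]
    congr 1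
    rw [List.getElem?_eq_getElem hn, List.getD_eq_getElem _ _ hn]
    simp

lemma chunkF_eq_block (m : ℕ → ℕ) (x : List ℕ) {ℓ : ℕ} (b : List (List ℕ))
    (hblen : b.length = ℓ - 1)
    (hblk : ∀ i, 1 ≤ i → i < ℓ → (b.getD (i - 1) []).length = m i)
    (hflat : b.flatten = x)
    {i : ℕ} (hi1 : 1 ≤ i) (hiℓ : i < ℓ) :
    chunkF m x i = b.getD (i - 1) [] := by
  set k := i - 1 with hk
  have hkb : k < b.length := by omega
  have hoff : off m i = (b.take k).flatten.length := by
    rw [flatten_take_length b k (by omega)]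
    unfold off
    rw [Finset.sum_Ico_eq_sum_range]
    apply Finset.sum_congr rfl
    intro j hj
    rw [Finset.mem_range] at hj
    have h := hblk (1 + j) (by omega) (by omega)
    rw [show 1 + j - 1 = j by omega] at h
    exact h.symm
  obtain ⟨i', rfl⟩ : ∃ i', i = i' + 1 := ⟨i - 1, by omega⟩
  show (x.drop (off m (i' + 1))).take (m (i' + 1)) = b.getD k []
  have hdrop : b.drop k = b.getD k [] :: b.drop (k + 1) := by
    rw [List.drop_eq_getElem_cons hkb, List.getD_eq_getElem _ _ hkb]
  have hx2 : b.flatten = (b.take k).flatten ++ (b.getD k [] ++ (b.drop (k + 1)).flatten) := by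
    conv_lhs => rw [← List.take_append_drop k b]
    rw [List.flatten_append, hdrop, List.flatten_cons]
  rw [hoff, ← hflat, hx2, List.drop_left, ← hblk (i' + 1) (by omega) (by omega),
    show (i' + 1) - 1 = k from rfl]
  exact List.take_left

/-- Theorem 1. Let `M = {v 0 ^ m 0, …, v (ℓ-1) ^ m (ℓ-1)}` with distinct
ranks and positive multiplicities, `n = ∑ m i`.  If there exists a code
`C_L ⊆ (Z_q)^{n - m 0}` with `q > n_{ℓ-1}` and minimum Lee distance `d`, then there exists
a code `C_K ⊆ S(M)` with minimum Kendall τ-distance at least `d` and of size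
`|C_K| = |C_L ∩ [Z]^M|`, where `[Z]^M` is viewed (via concatenation of the blocks) as a
subset of `(Z_q)^{n - m 0}`. -/
theorem stmt6 (ℓ : ℕ) (v : ℕ → ℤ) (m : ℕ → ℕ)
    (hv : ∀ i j, i < j → j < ℓ → v i < v j)
    (hm : ∀ i, i < ℓ → 0 < m i)
    (q d : ℕ)
    (hq : (∑ j ∈ Finset.range (ℓ - 1), m j) < q)
    (CL : Set (List ℕ))
    (hCL : ∀ x ∈ CL, x.length = (∑ i ∈ Finset.range ℓ, m i) - m 0 ∧ ∀ y ∈ x, y < q)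
    (hCLdist : ∀ x ∈ CL, ∀ y ∈ CL, x ≠ y → d ≤ leeDistL q x y) :
    ∃ CK : Set (List ℤ),
      (∀ σ ∈ CK,
        (↑σ : Multiset ℤ) = ∑ i ∈ Finset.range ℓ, Multiset.replicate (m i) (v i)) ∧
      (∀ σ ∈ CK, ∀ π ∈ CK, σ ≠ π → d ≤ dK σ π) ∧
      CK.ncard = {x ∈ CL | ∃ b : List (List ℕ),
        (b.length = ℓ - 1 ∧ ∀ i, 1 ≤ i → i < ℓ →
          (b.getD (i - 1) []).length = m i ∧
          List.Chain' (· ≥ ·) (b.getD (i - 1) []) ∧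
          ∀ y ∈ b.getD (i - 1) [], y ≤ ∑ j ∈ Finset.range i, m j) ∧
        b.flatten = x}.ncard := by

  classical
  set Z := {x ∈ CL | ∃ b : List (List ℕ),
      (b.length = ℓ - 1 ∧ ∀ i, 1 ≤ i → i < ℓ →
        (b.getD (i - 1) []).length = m i ∧
        List.Chain' (· ≥ ·) (b.getD (i - 1) []) ∧
        ∀ y ∈ b.getD (i - 1) [], y ≤ ∑ j ∈ Finset.range i, m j) ∧
      b.flatten = x} with hZdef
  have hoffn : off m ℓ = (∑ i ∈ Finset.range ℓ, m i) - m 0 := by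
    rcases Nat.eq_zero_or_pos ℓ with h | h
    · subst h; simp [off]
    · rw [Finset.range_eq_Ico, Finset.sum_eq_sum_Ico_succ_bot h]
      simp only [zero_add]
      unfold off
      omega
  have hxlen : ∀ x ∈ Z, x.length = off m ℓ := by
    intro x hx
    rw [hoffn]
    exact (hCL x hx.1).1
  have hchainZ : ∀ x ∈ Z, ∀ i, 1 ≤ i → i < ℓ →
      List.Chain' (· ≥ ·) (chunkF m x i) ∧
      ∀ y ∈ chunkF m x i, y ≤ ∑ j ∈ Finset.range i, m j := by
    intro x hx i hi1 hiℓ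
    obtain ⟨hxCL, b, ⟨hblen, hprops⟩, hflat⟩ := hx
    have hblk : ∀ i, 1 ≤ i → i < ℓ → (b.getD (i - 1) []).length = m i :=
      fun i h1 h2 => (hprops i h1 h2).1
    rw [chunkF_eq_block m x b hblen hblk hflat hi1 hiℓ]
    exact ⟨(hprops i hi1 hiℓ).2.1, (hprops i hi1 hiℓ).2.2⟩
  have hPsi : ∀ x ∈ Z, PsiK v (ℓ - 1) (stageF v m x ℓ) = x := by
    intro x hx
    rcases Nat.eq_zero_or_pos ℓ with h | h
    · subst h
      have hx0 : x.length = 0 := by simpa [off] using hxlen x hx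
      have : x = [] := List.eq_nil_of_length_eq_zero hx0
      subst this
      simp [PsiK, stageF]
    · exact psiK_stageF v m x h hv (hxlen x hx)
        (fun i h1 h2 => (hchainZ x hx i h1 h2).1)
        (fun i h1 h2 => (hchainZ x hx i h1 h2).2)
  have hinj : Set.InjOn (fun x => stageF v m x ℓ) Z := by
    intro x hx y hy hxy
    have := congrArg (PsiK v (ℓ - 1)) hxy
    rwa [hPsi x hx, hPsi y hy] at this
  have hvinj : ∀ i j, i < ℓ - 1 → j < ℓ - 1 → v (i + 1) = v (j + 1) → i = j := by
    intro i j hi hj heq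
    by_contra hne
    rcases Nat.lt_or_ge i j with h | h
    · exact absurd heq (ne_of_lt (hv (i + 1) (j + 1) (by omega) (by omega)))
    · have hji : j < i := by omega
      exact absurd heq.symm (ne_of_lt (hv (j + 1) (i + 1) (by omega) (by omega)))
  have hmultZ : ∀ x ∈ Z, (↑(stageF v m x ℓ) : Multiset ℤ)
      = ∑ i ∈ Finset.range ℓ, Multiset.replicate (m i) (v i) :=
    fun x hx => stageF_multiset v m x (hxlen x hx) le_rfl
  refine ⟨(fun x => stageF v m x ℓ) '' Z, ?_, ?_, Set.ncard_image_of_injOn hinj⟩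
  · rintro σ ⟨x, hx, rfl⟩
    exact hmultZ x hx
  · rintro σ ⟨x, hx, rfl⟩ π ⟨y, hy, rfl⟩ hne
    have hxy : x ≠ y := fun h => hne (by rw [h])
    have hmult : (↑(stageF v m x ℓ) : Multiset ℤ) = ↑(stageF v m y ℓ) := by
      rw [hmultZ x hx, hmultZ y hy]
    obtain ⟨n0, h0⟩ := reach hmult
    refine le_csInf ⟨n0, h0⟩ ?_
    intro nn hnn
    calc d ≤ leeDistL q x y := hCLdist x hx.1 y hy.1 hxy
      _ ≤ manhattanL x y := leeDistL_le_manhattanL q x y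
      _ = manhattanL (PsiK v (ℓ - 1) (stageF v m x ℓ)) (PsiK v (ℓ - 1) (stageF v m y ℓ)) := by
          rw [hPsi x hx, hPsi y hy]
      _ ≤ nn := manhattan_psiK_steps v (ℓ - 1) hvinj hnn
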